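/- With notation as above, the image Q_f of the idempotent map f̂ equals the set {a ∈ S : α_g(a 1_{g⁻¹}) = f(g) a for all g ∈ G}. -/

import Mathlib

/-- A unital partial action of a group `G` on a commutative ring `S`.
The unital ideal `S_g` is `S * e g` where `e g` is a central idempotent,
and `act g` is the partial isomorphism `α_g` (extended to all of `S` by
first multiplying by the identity `e g⁻¹` of its domain ideal). -/
structure PartialAction (G : Type*) [Group G] (S : Type*) [CommRing S] where
  e : G → S
  act : G → S → S
  e_idem : ∀ g, e g * e g = e g
  e_one : e 1 = 1
  act_one : ∀ x, act 1 x = x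
  act_add : ∀ g x y, act g (x + y) = act g x + act g y
  act_mul : ∀ g x y, act g (x * y) = act g x * act g y
  act_restrict : ∀ g x, act g (x * e g⁻¹) = act g x
  act_mem : ∀ g x, act g x * e g = act g x
  act_e : ∀ g, act g (e g⁻¹) = e g
  act_inter : ∀ g h, act g (e g⁻¹ * e h) = e g * e (g * h)
  act_comp : ∀ g h x, act g (act h x * e g⁻¹) = act (g * h) (x * e h⁻¹) * e g
  act_inv : ∀ g x, act g⁻¹ (act g (x * e g⁻¹)) = x * e g⁻¹

namespace PartialAction

variable {G : Type*} [Group G] {S : Type*} [CommRing S] (P : PartialAction G S)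

/-- The subring of subinvariants `S^α`. -/
def invariants : Set S := {a | ∀ g : G, P.act g (a * P.e g⁻¹) = a * P.e g}

/-- `S ⊇ R` is a partial Galois extension: `R = S^α` and there is a
partial Galois coordinate system. -/
def IsPartialGalois [Fintype G] [DecidableEq G] (R : Subring S) : Prop :=
  ((R : Set S) = P.invariants) ∧
    ∃ m : ℕ, ∃ x y : Fin m → S, ∀ g : G,
      (∑ i : Fin m, x i * P.act g (y i * P.e g⁻¹)) = if g = 1 then 1 else 0

/-- A partial 1-cocycle with values in `S`: `f g` is invertible in the
unital ideal `S e g` with inverse `finv g`, and the cocycle identity holds. -/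
structure Cocycle where
  f : G → S
  finv : G → S
  f_mem : ∀ g, f g * P.e g = f g
  finv_mem : ∀ g, finv g * P.e g = finv g
  f_mul_finv : ∀ g, f g * finv g = P.e g
  cocycle : ∀ g h, f (g * h) * P.e g = f g * P.act g (f h * P.e g⁻¹)

variable {P}

theorem act_zero (g : G) : P.act g 0 = 0 := by
  have := P.act_add g 0 0
  simpa using this.symm

/-- The set `Q_f = {a ∈ S : α_g(a 1_{g⁻¹}) = f(g) a for all g}` attached to a map `f : G → S`. -/
def Qset (P : PartialAction G S) (f : G → S) : Set S :=
  {a | ∀ g : G, P.act g (a * P.e g⁻¹) = f g * a}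

/-- `Q_f` as an `R`-submodule of `S`, where `R` is a subring of invariants. -/
def Qmod (P : PartialAction G S) (R : Subring S)
    (hR : ∀ r ∈ R, ∀ g : G, P.act g (r * P.e g⁻¹) = r * P.e g)
    (f : G → S) : Submodule R S where
  carrier := Qset P f
  zero_mem' := by
    intro g
    simp [Qset, act_zero]
  add_mem' := by
    intro a b ha hb g
    have := P.act_add g (a * P.e g⁻¹) (b * P.e g⁻¹)
    rw [Qset] at *
    rw [add_mul, this, ha g, hb g, mul_add]
  smul_mem' := by
    intro c x hx g
    have hc : (c : S) ∈ (R : Set S) := c.2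
    have hcx : c • x = (c : S) * x := Subring.smul_def c x
    have hx' : ∀ g : G, P.act g (x * P.e g⁻¹) = f g * x := hx
    rw [hcx]
    have h1 : P.act g ((c : S) * x * P.e g⁻¹) = P.act g ((c : S)) * P.act g x := by
      rw [P.act_restrict, P.act_mul]
    have h2 : P.act g ((c : S)) = (c : S) * P.e g := by
      rw [← P.act_restrict g (c : S), hR c c.2 g]
    have h3 : P.act g x = f g * x := by
      rw [← P.act_restrict g x]; exact hx' g
    have h4 : (f g * x) * P.e g = f g * x := by
      have := P.act_mem g (x * P.e g⁻¹)
      rw [P.act_restrict, h3] at this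
      exact this
    rw [h1, h2, h3]
    have h5 : (c : S) * P.e g * (f g * x) = (c : S) * (f g * x * P.e g) := by ring
    rw [h5, h4]
    ring

end PartialAction

namespace PartialAction

variable {G : Type*} [Group G] {S : Type*} [CommRing S] (P : PartialAction G S)

theorem act_sum {ι : Type*} (g : G) (s : Finset ι) (φ : ι → S) :
    P.act g (∑ i ∈ s, φ i) = ∑ i ∈ s, P.act g (φ i) := by
  classical
  induction s using Finset.induction_on with
  | empty => simp [act_zero]
  | insert _ _ hmem ih => rw [Finset.sum_insert hmem, P.act_add, ih, Finset.sum_insert hmem]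

theorem act_e' (g k : G) : P.act g (P.e k) = P.e g * P.e (g * k) := by
  rw [← P.act_restrict g (P.e k), mul_comm (P.e k), P.act_inter]

theorem finv_act (c : P.Cocycle) (h g : G) :
    P.act h (c.finv g) = c.f h * c.finv (h * g) := by
  have h1 : c.f (h * g) * P.e h = c.f h * P.act h (c.f g) := by
    rw [← P.act_restrict h (c.f g)]; exact c.cocycle h g
  have h2 : P.act h (c.finv g) = P.act h (c.finv g) * (P.e h * P.e (h * g)) := by
    conv_lhs => rw [← c.finv_mem g, P.act_mul, P.act_e']
  have h3 : P.act h (c.f g) * P.act h (c.finv g) = P.e h * P.e (h * g) := by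
    rw [← P.act_mul, c.f_mul_finv, P.act_e']
  have h4 := c.f_mul_finv (h * g)
  have h5 := c.f_mem h
  have h6 := c.finv_mem (h * g)
  linear_combination h2 - P.act h (c.finv g) * P.e h * h4
    + P.act h (c.finv g) * c.finv (h * g) * h1
    + c.f h * c.finv (h * g) * h3
    + c.finv (h * g) * P.e (h * g) * h5 + c.f h * h6

theorem term_step (c : P.Cocycle) (w x : S) (h g : G) :
    P.act h (c.finv g * P.act g (w * x * P.e g⁻¹) * P.e h⁻¹) =
      c.f h * (c.finv (h * g) * P.act (h * g) (w * x * P.e (h * g)⁻¹)) * P.e h := by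
  rw [mul_assoc, P.act_mul, P.finv_act c h g, P.act_comp,
    mul_assoc (w * x), P.e_idem, P.act_mul, P.act_e', mul_inv_cancel_right,
    ← P.act_restrict (h * g) (w * x)]
  linear_combination c.f h * P.act (h * g) (w * x * P.e (h * g)⁻¹) * P.e h * P.e h
      * c.finv_mem (h * g)
    + c.f h * P.act (h * g) (w * x * P.e (h * g)⁻¹) * c.finv (h * g) * P.e_idem h

end PartialAction


/-- the image of `f̂` is `Q_f = {a : α_g(a 1_{g⁻¹}) = f(g) a, ∀ g}`. -/
theorem range_hat_eq_Qset {G : Type*} [CommGroup G] [Fintype G] [DecidableEq G]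
    {S : Type*} [CommRing S] (P : PartialAction G S) (R : Subring S)
    (hGal : P.IsPartialGalois R)
    (w : S) (hw : (∑ g : G, P.act g (w * P.e g⁻¹)) = 1)
    (c : P.Cocycle) (F : S → S)
    (hF : ∀ x, F x = ∑ g : G, c.finv g * P.act g (w * x * P.e g⁻¹)) :
    Set.range F = PartialAction.Qset P c.f := by
  
  ext a
  constructor
  · rintro ⟨x, rfl⟩
    intro h
    rw [hF x, Finset.sum_mul, P.act_sum]
    rw [Finset.sum_congr rfl fun g _ => P.term_step c w x h g]
    rw [Fintype.sum_equiv (Equiv.mulLeft h)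
        (fun g => c.f h * (c.finv (h * g) * P.act (h * g) (w * x * P.e (h * g)⁻¹)) * P.e h)
        (fun g => c.f h * (c.finv g * P.act g (w * x * P.e g⁻¹)) * P.e h)
        (fun g => rfl)]
    rw [Finset.mul_sum]
    refine Finset.sum_congr rfl fun g _ => ?_
    linear_combination (c.finv g * P.act g (w * x * P.e g⁻¹)) * c.f_mem h
  · intro ha
    refine ⟨a, ?_⟩
    rw [hF a]
    have key : ∀ g : G, c.finv g * P.act g (w * a * P.e g⁻¹) = P.act g (w * P.e g⁻¹) * a := by
      intro g
      have e1 : w * a * P.e g⁻¹ = (w * P.e g⁻¹) * (a * P.e g⁻¹) := by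
        linear_combination (-(w * a)) * P.e_idem g⁻¹
      rw [e1, P.act_mul, ha g]
      linear_combination a * P.act g (w * P.e g⁻¹) * c.f_mul_finv g
        + a * P.act_mem g (w * P.e g⁻¹)
    rw [Finset.sum_congr rfl fun g _ => key g, ← Finset.sum_mul, hw, one_mul]
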